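/- Assume κ₂ ≠ ν and β₁ ≠ 1. Then x₁ = 0 is a root of the coexistence quadratic φ₂·X² + φ₁·X + φ₀ (i.e. φ₀ = 0) if and only if the transcritical bifurcation relation T₅₇ holds: α·(κ₂ − ν)·(β₁ − 1) = (β₂ − 1)·ζ. Moreover, when T₅₇ holds, the coexistence-branch point at x₁ = 0, namely (0, (ζ − A·0)/B, yˢ, y₁, y₂, zˢ, z) with x₂ = ζ/B, z = (β₁ − β₂·x₂)/α, zˢ = (1 − β₁ + (β₂ − 1)·x₂)/αˢ, y₁ = (C/μ)·0·z = 0, y₂ = (α/γ₂)·x₂·z, yˢ = 0, coincides with the spec-free equilibrium v₅ given by x₁ = 0, x₂ = ζ/B, yˢ = 0, y₁ = 0, y₂ = ζ(β₁B − β₂ζ)/(B²γ₂), zˢ = 0, z = β₁/α − β₂ζ/(αB). -/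

import Mathlib

theorem T₅₇_root_and_coincidence_with_v₅
    (α αs β₁ β₂ μ γs γ₁ γ₂ κ₁ κ₂ ν νs ζs ζ : ℝ)
    (hα : 0 < α) (hαs : 0 < αs) (hβ₁pos : 0 < β₁) (hβ₂pos : 0 < β₂)
    (hμ : 0 < μ) (hγs : 0 < γs) (hγ₁ : 0 < γ₁) (hγ₂ : 0 < γ₂)
    (hκ₁ : 0 < κ₁) (hκ₂ : 0 < κ₂) (hν : 0 < ν) (hνs : 0 < νs)
    (hζs : 0 < ζs) (hζ : 0 < ζ)
    (hκν : κ₂ ≠ ν) (hβ₁1 : β₁ ≠ 1)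
    (A : ℝ) (hA : A = α * (γ₁ * κ₁ / (μ + γ₁) - ν))
    (B : ℝ) (hB : B = α * (κ₂ - ν))
    (C : ℝ) (hC : C = α * μ / (μ + γ₁))
    (D : ℝ) (hD : D = αs * (νs - 1))
    (φ₂ φ₁ φ₀ : ℝ)
    (hφ₂ : φ₂ = (A - B) * ((D * α + C * αs) * β₂ - D * α))
    (hφ₁ : φ₁ = (A - B) * α * ζs * (β₂ - 1) + (D * α + C * αs) * (B * β₁ - ζ * β₂) + D * α * (ζ - B))
    (hφ₀ : φ₀ = α * ζs * ((1 - β₂) * ζ + B * (β₁ - 1)))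
    (x₂ z zs y₂ : ℝ)
    (hx₂ : x₂ = (ζ - A * 0) / B)
    (hz : z = (β₁ - β₂ * x₂) / α)
    (hzs : zs = (1 - β₁ + (β₂ - 1) * x₂) / αs)
    (hy₂ : y₂ = (α / γ₂) * x₂ * z) :
    (φ₀ = 0 ↔ α * (κ₂ - ν) * (β₁ - 1) = (β₂ - 1) * ζ) ∧
    (α * (κ₂ - ν) * (β₁ - 1) = (β₂ - 1) * ζ →
      ((0 : ℝ), x₂, (0 : ℝ), (0 : ℝ), y₂, zs, z) =
        ((0 : ℝ), ζ / B, (0 : ℝ), (0 : ℝ), ζ * (β₁ * B - β₂ * ζ) / (B ^ 2 * γ₂),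
          (0 : ℝ), β₁ / α - β₂ * ζ / (α * B))) := by
  have hBne : B ≠ 0 := by
    rw [hB]; exact mul_ne_zero hα.ne' (sub_ne_zero.mpr hκν)
  have hx₂' : x₂ = ζ / B := by rw [hx₂]; ring_nf
  constructor
  · rw [hφ₀, hB]
    constructor
    · intro h
      have h2 : (1 - β₂) * ζ + α * (κ₂ - ν) * (β₁ - 1) = 0 := by
        have := mul_eq_zero.mp h
        rcases this with h' | h'
        · exact absurd h' (mul_ne_zero hα.ne' hζs.ne')
        · exact h'
      linarith
    · intro h
      have : (1 - β₂) * ζ + α * (κ₂ - ν) * (β₁ - 1) = 0 := by linarith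
      rw [this, mul_zero]
  · intro hT
    have hz' : z = β₁ / α - β₂ * ζ / (α * B) := by
      rw [hz, hx₂']; field_simp
    have hy₂' : y₂ = ζ * (β₁ * B - β₂ * ζ) / (B ^ 2 * γ₂) := by
      rw [hy₂, hz, hx₂']; field_simp
    have hzs' : zs = 0 := by
      rw [hzs, hx₂']
      have : (1 - β₁ + (β₂ - 1) * (ζ / B)) = 0 := by
        have hB' : (β₂ - 1) * ζ = B * (β₁ - 1) := by rw [hB]; linarith
        field_simp
        linarith [hB']
      rw [this, zero_div]
    rw [hx₂', hz', hy₂', hzs']
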